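/- For each nonnegative integer r, the series B_r := Σ_{ℓ powerful, g(ℓ) = r} 1/ℓ converges, and there exists a constant C > 0 such that for all real y ≥ 2, |Σ_{ℓ powerful, ℓ ≤ y, g(ℓ) = r} 1/ℓ − B_r| ≤ C / y^{1/2}. -/

import Mathlib

open Finset
open scoped Classical

/-- Number of distinct exponents in the prime factorization of `n`. -/
noncomputable def fexp (n : ℕ) : ℕ :=
  (n.primeFactors.image fun p => n.factorization p).card

/-- `n` is powerful if every prime dividing `n` divides it at least twice. -/
def Powerful (n : ℕ) : Prop :=
  0 < n ∧ ∀ p : ℕ, p.Prime → p ∣ n → p ^ 2 ∣ n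

/-- Dedekind `ψ` function, as a real number. -/
noncomputable def dedekindPsi (n : ℕ) : ℝ :=
  (n : ℝ) * ∏ p ∈ n.primeFactors, (1 + 1 / (p : ℝ))

noncomputable def rho : ℕ → ℕ → ℝ
  | 0, _ => 0
  | 1, n => if n = 1 then 1 else 0
  | (k + 2), n =>
      if n = 1 ∨ ¬ Squarefree n then 0
      else (1 / ((n : ℝ) - 1)) * ∑ d ∈ n.divisors.filter (· < n), rho (k + 1) d

/-- `g(n) = ω(n) - f(n)`. -/
noncomputable def gexp (n : ℕ) : ℕ := n.primeFactors.card - fexp n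

/-- `n` is special if all exponents in its prime factorization are distinct. -/
noncomputable def Special (n : ℕ) : Prop := fexp n = n.primeFactors.card

lemma powerful_decomp (ℓ : ℕ) (h : Powerful ℓ) :
    ∃ a b : ℕ, 1 ≤ a ∧ 1 ≤ b ∧ ℓ = a ^ 2 * b ^ 3 := by
  induction ℓ using Nat.strong_induction_on with
  | _ ℓ ih =>
  obtain ⟨hpos, hpow⟩ := h
  rcases eq_or_lt_of_le (Nat.one_le_iff_ne_zero.mpr hpos.ne') with h1 | h1
  · exact ⟨1, 1, le_refl _, le_refl _, by omega⟩
  · set p := ℓ.minFac with hp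
    have hpprime : p.Prime := Nat.minFac_prime (by omega)
    have hpdvd : p ∣ ℓ := Nat.minFac_dvd ℓ
    set e := ℓ.factorization p with he
    have he2 : 2 ≤ e := by
      have := hpow p hpprime hpdvd
      rwa [Nat.Prime.pow_dvd_iff_le_factorization hpprime hpos.ne'] at this
    set m := ℓ / p ^ e with hm
    have hsplit : p ^ e * m = ℓ := Nat.ordProj_mul_ordCompl_eq_self ℓ p
    have hmpos : 0 < m := Nat.ordCompl_pos p hpos.ne'
    have hmdvd : m ∣ ℓ := ⟨p ^ e, by rw [mul_comm]; exact hsplit.symm⟩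
    have hmlt : m < ℓ := by
      have hp2 : 2 ≤ p := hpprime.two_le
      have : 4 ≤ p ^ e := by
        calc (4:ℕ) = 2 ^ 2 := by norm_num
        _ ≤ p ^ 2 := Nat.pow_le_pow_left hp2 2
        _ ≤ p ^ e := Nat.pow_le_pow_right (by omega) he2
      nlinarith
    have hmfact : m.factorization = ℓ.factorization.erase p := Nat.factorization_ordCompl ℓ p
    have hmpow : Powerful m := by
      refine ⟨hmpos, fun q hq hqm => ?_⟩
      have hqp : q ≠ p := by
        intro hqp; subst hqp
        exact Nat.not_dvd_ordCompl hq hpos.ne' hqm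
      rw [Nat.Prime.pow_dvd_iff_le_factorization hq hmpos.ne', hmfact,
        Finsupp.erase_ne hqp]
      have hqℓ : q ∣ ℓ := hqm.trans hmdvd
      have := hpow q hq hqℓ
      rwa [Nat.Prime.pow_dvd_iff_le_factorization hq hpos.ne'] at this
    obtain ⟨a, b, ha, hb, hab⟩ := ih m hmlt hmpow
    have hppos : 0 < p := hpprime.pos
    rcases Nat.even_or_odd e with heven | hodd
    · obtain ⟨x, hx⟩ := heven
      refine ⟨p ^ x * a, b, Nat.one_le_iff_ne_zero.mpr
        (Nat.mul_ne_zero (pow_ne_zero _ hppos.ne') (by omega)), hb, ?_⟩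
      rw [← hsplit, hab, hx]; ring
    · obtain ⟨k, hk⟩ := hodd
      have hk1 : 1 ≤ k := by omega
      have hke : e = (k - 1) + (k - 1) + 3 := by omega
      refine ⟨p ^ (k - 1) * a, p * b, Nat.one_le_iff_ne_zero.mpr
        (Nat.mul_ne_zero (pow_ne_zero _ hppos.ne') (by omega)),
        Nat.one_le_iff_ne_zero.mpr (Nat.mul_ne_zero hppos.ne' (by omega)), ?_⟩
      rw [← hsplit, hab, hke]; ring

lemma sum_inv_sq_tail (A : Finset ℕ) (T : ℝ) (hT : 1 ≤ T)
    (h : ∀ a ∈ A, T < (a : ℝ)) : ∑ a ∈ A, 1 / (a : ℝ) ^ 2 ≤ 2 / T := by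
  have hT0 : 0 < T := by linarith
  rcases A.eq_empty_or_nonempty with rfl | hA
  · simp; positivity
  · have h2 : ∀ a ∈ A, 2 ≤ a := by
      intro a ha
      have := h a ha
      by_contra hc
      push_neg at hc
      interval_cases a <;> simp_all <;> linarith
    set m := A.min' hA with hmdef
    have hmA : m ∈ A := A.min'_mem hA
    have hm2 : 2 ≤ m := h2 m hmA
    set N := A.max' hA with hNdef
    have hsub : A ⊆ Finset.Icc m N := fun a ha =>
      Finset.mem_Icc.mpr ⟨A.min'_le a ha, A.le_max' a ha⟩
    have key : ∀ a : ℕ, 2 ≤ a → 1 / (a : ℝ) ^ 2 ≤ 1 / ((a : ℝ) - 1) - 1 / a := by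
      intro a ha
      have h1 : (1:ℝ) ≤ (a : ℝ) - 1 := by
        have : (2:ℝ) ≤ a := by exact_mod_cast ha
        linarith
      rw [div_sub_div _ _ (by linarith) (by positivity : (a:ℝ) ≠ 0)]
      rw [div_le_div_iff₀ (by positivity) (by positivity)]
      nlinarith
    have hlast : (2:ℝ) ≤ ((m + (N + 1 - m) : ℕ) : ℝ) := by
      have : 2 ≤ m + (N + 1 - m) := by omega
      exact_mod_cast this
    calc ∑ a ∈ A, 1 / (a : ℝ) ^ 2
        ≤ ∑ a ∈ Finset.Icc m N, 1 / (a : ℝ) ^ 2 := by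
          apply Finset.sum_le_sum_of_subset_of_nonneg hsub
          intro i _ _; positivity
      _ ≤ ∑ a ∈ Finset.Icc m N, (1 / ((a : ℝ) - 1) - 1 / a) := by
          apply Finset.sum_le_sum
          intro a ha
          have ham : m ≤ a := (Finset.mem_Icc.mp ha).1
          exact key a (by omega)
      _ = ∑ i ∈ Finset.range (N + 1 - m),
            ((fun j => 1 / ((m + j : ℕ) - 1 : ℝ)) i - (fun j => 1 / ((m + j : ℕ) - 1 : ℝ)) (i + 1)) := by
          rw [← Finset.Ico_add_one_right_eq_Icc, Finset.sum_Ico_eq_sum_range]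
          apply Finset.sum_congr rfl
          intro i _
          push_cast
          ring
      _ = 1 / ((m : ℝ) + 0 - 1) - 1 / ((m + (N + 1 - m) : ℕ) - 1 : ℝ) := by
          rw [Finset.sum_range_sub']
          norm_num
      _ ≤ 1 / ((m : ℝ) - 1) := by
          have h0 : (0:ℝ) ≤ 1 / ((m + (N + 1 - m) : ℕ) - 1 : ℝ) :=
            div_nonneg zero_le_one (by linarith)
          have hmm : (m:ℝ) + 0 - 1 = (m:ℝ) - 1 := by ring
          rw [hmm]
          linarith
      _ ≤ 2 / T := by
          have hTm : T < (m : ℝ) := h m hmA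
          have hm2' : (2:ℝ) ≤ m := by exact_mod_cast hm2
          rw [div_le_div_iff₀ (by linarith) hT0]
          nlinarith

noncomputable def Kconst : ℝ := ∑' b : ℕ, 1 / (b : ℝ) ^ ((3:ℝ)/2)

lemma Ksummable : Summable (fun b : ℕ => 1 / (b : ℝ) ^ ((3:ℝ)/2)) := by
  rw [Real.summable_one_div_nat_rpow]
  norm_num

lemma sum_inv_sq_all (A : Finset ℕ) (h : ∀ a ∈ A, 1 ≤ a) :
    ∑ a ∈ A, 1 / (a : ℝ) ^ 2 ≤ 3 := by
  have hsplit : A = A.filter (· = 1) ∪ A.filter (fun a => ¬ a = 1) := by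
    simp [Finset.filter_union_filter_not_eq]
  rw [hsplit, Finset.sum_union (Finset.disjoint_filter_filter_not A A _)]
  have h1 : ∑ a ∈ A.filter (· = 1), 1 / (a : ℝ) ^ 2 ≤ 1 := by
    have : A.filter (· = 1) ⊆ {1} := by
      intro a ha
      simp only [Finset.mem_filter] at ha
      simp [ha.2]
    calc ∑ a ∈ A.filter (· = 1), 1 / (a : ℝ) ^ 2
        ≤ ∑ a ∈ ({1} : Finset ℕ), 1 / (a : ℝ) ^ 2 :=
          Finset.sum_le_sum_of_subset_of_nonneg this (by intros; positivity)
      _ = 1 := by norm_num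
  have h2 : ∑ a ∈ A.filter (fun a => ¬ a = 1), 1 / (a : ℝ) ^ 2 ≤ 2 := by
    have := sum_inv_sq_tail (A.filter (fun a => ¬ a = 1)) 1 le_rfl ?_
    · linarith [this]
    · intro a ha
      simp only [Finset.mem_filter] at ha
      have hge := h a ha.1
      have : 2 ≤ a := by omega
      have h1a : (2:ℕ) ≤ a := this
      have : (2:ℝ) ≤ (a:ℝ) := by exact_mod_cast h1a
      linarith
  linarith

lemma pair_sum (P : Finset (ℕ × ℕ)) (y : ℝ) (hy : 0 < y)
    (h : ∀ q ∈ P, 1 ≤ q.1 ∧ 1 ≤ q.2 ∧ y < (q.1 : ℝ) ^ 2 * (q.2 : ℝ) ^ 3) :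
    ∑ q ∈ P, 1 / ((q.1 : ℝ) ^ 2 * (q.2 : ℝ) ^ 3) ≤ (3 * Kconst) / y ^ ((1:ℝ)/2) := by
  set s := y ^ ((1:ℝ)/2) with hs
  have hs0 : 0 < s := Real.rpow_pos_of_pos hy _
  have hs2 : s ^ 2 = y := by
    rw [hs, ← Real.rpow_natCast (y ^ ((1:ℝ)/2)) 2, ← Real.rpow_mul hy.le]
    norm_num
  have hfib := Finset.sum_fiberwise_of_maps_to (s := P) (t := P.image Prod.snd) (g := Prod.snd)
      (fun q hq => Finset.mem_image_of_mem Prod.snd hq)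
      (fun q : ℕ × ℕ => 1 / ((q.1 : ℝ) ^ 2 * (q.2 : ℝ) ^ 3))
  rw [← hfib]
  have hinner : ∀ b ∈ P.image Prod.snd,
      ∑ q ∈ P.filter (fun q => q.2 = b), 1 / ((q.1 : ℝ) ^ 2 * (q.2 : ℝ) ^ 3)
        ≤ (3 / s) * (1 / (b : ℝ) ^ ((3:ℝ)/2)) := by
    intro b hb
    obtain ⟨q0, hq0P, hq0b⟩ := Finset.mem_image.mp hb
    have hb1 : 1 ≤ b := hq0b ▸ (h q0 hq0P).2.1
    have hbR : (1:ℝ) ≤ (b : ℝ) := by exact_mod_cast hb1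
    set t := (b : ℝ) ^ ((3:ℝ)/2) with ht
    have ht0 : 0 < t := Real.rpow_pos_of_pos (by linarith) _
    have ht2 : t ^ 2 = (b : ℝ) ^ 3 := by
      rw [ht, ← Real.rpow_natCast ((b:ℝ) ^ ((3:ℝ)/2)) 2, ← Real.rpow_mul (by linarith)]
      norm_num
    -- rewrite inner sum
    have hrw : ∑ q ∈ P.filter (fun q => q.2 = b), 1 / ((q.1 : ℝ) ^ 2 * (q.2 : ℝ) ^ 3)
        = (∑ a ∈ (P.filter (fun q => q.2 = b)).image Prod.fst, 1 / (a : ℝ) ^ 2) * (1 / (b:ℝ) ^ 3) := by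
      rw [Finset.sum_mul]
      rw [Finset.sum_image ?hinj]
      case hinj =>
        intro q hq q' hq' hfst
        simp only [Finset.coe_filter, Set.mem_setOf_eq] at hq hq'
        exact Prod.ext hfst (hq.2.trans hq'.2.symm)
      apply Finset.sum_congr rfl
      intro q hq
      simp only [Finset.mem_filter] at hq
      rw [hq.2]
      rw [one_div, one_div, one_div, mul_inv]
    rw [hrw]
    set A := (P.filter (fun q => q.2 = b)).image Prod.fst with hA
    have hAmem : ∀ a ∈ A, 1 ≤ a ∧ y < (a : ℝ) ^ 2 * (b : ℝ) ^ 3 := by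
      intro a ha
      obtain ⟨q, hqP, hqa⟩ := Finset.mem_image.mp ha
      simp only [Finset.mem_filter] at hqP
      obtain ⟨h1, h2, h3⟩ := h q hqP.1
      subst hqa
      rw [hqP.2] at h3
      exact ⟨h1, h3⟩
    have hb3pos : (0:ℝ) < (b:ℝ) ^ 3 := by positivity
    -- goal: (∑ a ∈ A, 1/a²) * (1/b³) ≤ (3/s) * (1/t)
    have hst : (3 / s) * (1 / t) = 3 / (s * t) := by field_simp
    rw [hst]
    by_cases hT : t ≤ s
    · -- T = s/t ≥ 1
      have hT1 : 1 ≤ s / t := (one_le_div ht0).mpr hT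
      have hAlt : ∀ a ∈ A, s / t < (a : ℝ) := by
        intro a ha
        obtain ⟨ha1, ha2⟩ := hAmem a ha
        have haR : (0:ℝ) ≤ (a : ℝ) := by positivity
        have hsq : (s / t) ^ 2 < (a:ℝ) ^ 2 := by
          rw [div_pow, hs2, ht2, div_lt_iff₀ hb3pos]
          linarith [ha2]
        exact lt_of_pow_lt_pow_left₀ 2 haR hsq
      have := sum_inv_sq_tail A (s / t) hT1 hAlt
      calc (∑ a ∈ A, 1 / (a : ℝ) ^ 2) * (1 / (b:ℝ) ^ 3)
          ≤ (2 / (s / t)) * (1 / (b:ℝ) ^ 3) := by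
            apply mul_le_mul_of_nonneg_right this (by positivity)
        _ = 2 / (s * t) := by rw [← ht2]; field_simp
        _ ≤ 3 / (s * t) := by
            have hst0 : (0:ℝ) < s * t := by positivity
            gcongr
            norm_num
    · -- t > s
      push_neg at hT
      have := sum_inv_sq_all A (fun a ha => (hAmem a ha).1)
      calc (∑ a ∈ A, 1 / (a : ℝ) ^ 2) * (1 / (b:ℝ) ^ 3)
          ≤ 3 * (1 / (b:ℝ) ^ 3) := by
            apply mul_le_mul_of_nonneg_right this (by positivity)
        _ = 3 / t ^ 2 := by rw [ht2]; field_simp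
        _ ≤ 3 / (s * t) := by
            apply div_le_div_of_nonneg_left (by norm_num) (by positivity) ?_
            nlinarith
  calc ∑ b ∈ P.image Prod.snd, ∑ q ∈ P.filter (fun q => q.2 = b), 1 / ((q.1 : ℝ) ^ 2 * (q.2 : ℝ) ^ 3)
      ≤ ∑ b ∈ P.image Prod.snd, (3 / s) * (1 / (b : ℝ) ^ ((3:ℝ)/2)) :=
        Finset.sum_le_sum hinner
    _ = (3 / s) * ∑ b ∈ P.image Prod.snd, 1 / (b : ℝ) ^ ((3:ℝ)/2) := by rw [Finset.mul_sum]
    _ ≤ (3 / s) * Kconst := by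
        apply mul_le_mul_of_nonneg_left ?_ (by positivity)
        exact Summable.sum_le_tsum _ (fun b _ => by positivity) Ksummable
    _ = (3 * Kconst) / s := by ring

noncomputable def pairOf (ℓ : ℕ) : ℕ × ℕ :=
  if h : Powerful ℓ then ⟨(powerful_decomp ℓ h).choose,
    (powerful_decomp ℓ h).choose_spec.choose⟩ else (1, 1)

lemma pairOf_spec (ℓ : ℕ) (h : Powerful ℓ) :
    1 ≤ (pairOf ℓ).1 ∧ 1 ≤ (pairOf ℓ).2 ∧ ℓ = (pairOf ℓ).1 ^ 2 * (pairOf ℓ).2 ^ 3 := by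
  rw [pairOf, dif_pos h]
  exact (powerful_decomp ℓ h).choose_spec.choose_spec

lemma Kpos : 1 ≤ Kconst := by
  have h := Summable.le_tsum Ksummable 1 (fun j _ => by positivity)
  have h2 : (1:ℝ) / ((1:ℕ):ℝ) ^ ((3:ℝ)/2) = 1 := by norm_num
  rw [h2] at h
  exact h

lemma master (F : Finset ℕ) (y : ℝ) (hy : 0 < y)
    (hF : ∀ ℓ ∈ F, Powerful ℓ ∧ y < (ℓ : ℝ)) :
    ∑ ℓ ∈ F, 1 / (ℓ : ℝ) ≤ (3 * Kconst) / y ^ ((1:ℝ)/2) := by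
  have hinj : ∀ x ∈ F, ∀ x' ∈ F, pairOf x = pairOf x' → x = x' := by
    intro x hx x' hx' he
    have h1 := (pairOf_spec x (hF x hx).1).2.2
    have h2 := (pairOf_spec x' (hF x' hx').1).2.2
    rw [h1, h2, he]
  have hre : ∑ q ∈ F.image pairOf, 1 / ((q.1 : ℝ) ^ 2 * (q.2 : ℝ) ^ 3)
      = ∑ ℓ ∈ F, 1 / (ℓ : ℝ) := by
    rw [Finset.sum_image hinj]
    apply Finset.sum_congr rfl
    intro ℓ hℓ
    have := (pairOf_spec ℓ (hF ℓ hℓ).1).2.2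
    congr 1
    conv_rhs => rw [this]
    push_cast
    ring
  rw [← hre]
  apply pair_sum _ y hy
  intro q hq
  obtain ⟨ℓ, hℓF, hℓq⟩ := Finset.mem_image.mp hq
  obtain ⟨h1, h2, h3⟩ := pairOf_spec ℓ (hF ℓ hℓF).1
  subst hℓq
  refine ⟨h1, h2, ?_⟩
  have := (hF ℓ hℓF).2
  rw [h3] at this
  push_cast at this
  exact this

lemma main_gen (p : ℕ → Prop) [DecidablePred p] (hp : ∀ ℓ, p ℓ → Powerful ℓ) :
    Summable (fun ℓ : ℕ => if p ℓ then 1 / (ℓ : ℝ) else 0) ∧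
    ∃ C : ℝ, 0 < C ∧ ∀ y : ℝ, 2 ≤ y →
      |(∑ ℓ ∈ (Finset.Icc 1 ⌊y⌋₊).filter p, 1 / (ℓ : ℝ)) -
          (∑' ℓ : ℕ, if p ℓ then 1 / (ℓ : ℝ) else 0)|
        ≤ C / y ^ ((1 : ℝ) / 2) := by
  set f : ℕ → ℝ := fun ℓ => if p ℓ then 1 / (ℓ : ℝ) else 0 with hf
  have hfnonneg : ∀ ℓ, 0 ≤ f ℓ := by
    intro ℓ
    rw [hf]
    dsimp only
    split <;> positivity
  have hbound : ∀ (F : Finset ℕ) (y : ℝ), 0 < y → (∀ ℓ ∈ F, p ℓ → y < (ℓ : ℝ)) →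
      ∑ ℓ ∈ F, f ℓ ≤ (3 * Kconst) / y ^ ((1:ℝ)/2) := by
    intro F y hy hFy
    rw [hf]
    dsimp only
    rw [← Finset.sum_filter]
    apply master _ y hy
    intro ℓ hℓ
    rw [Finset.mem_filter] at hℓ
    exact ⟨hp ℓ hℓ.2, hFy ℓ hℓ.1 hℓ.2⟩
  have hsummable : Summable f := by
    apply summable_of_sum_range_le hfnonneg
      (c := (3 * Kconst) / ((1:ℝ)/2) ^ ((1:ℝ)/2))
    intro n
    apply hbound _ ((1:ℝ)/2) (by norm_num)
    intro ℓ hℓ hc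
    have hpos : 0 < ℓ := (hp ℓ hc).1
    have : (1:ℝ) ≤ (ℓ:ℝ) := by exact_mod_cast hpos
    linarith
  refine ⟨hsummable, 3 * Kconst, by linarith [Kpos], ?_⟩
  intro y hy2
  have hy0 : (0:ℝ) < y := by linarith
  set N := ⌊y⌋₊ with hN
  have hNy : y < (N:ℝ) + 1 := Nat.lt_floor_add_one y
  have hins : Finset.range (N+1) = insert 0 (Finset.Icc 1 N) := by
    ext i
    simp only [Finset.mem_range, Finset.mem_insert, Finset.mem_Icc]
    omega
  have hf0 : f 0 = 0 := by
    rw [hf]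
    dsimp only
    split
    · norm_num
    · rfl
  have hpartial : ∑ ℓ ∈ (Finset.Icc 1 N).filter p, 1 / (ℓ : ℝ)
      = ∑ i ∈ Finset.range (N+1), f i := by
    rw [hins, Finset.sum_insert (by simp), hf0, zero_add, hf]
    dsimp only
    rw [Finset.sum_filter]
  have hsplit := Summable.sum_add_tsum_nat_add (f := f) (N+1) hsummable
  set Tail := ∑' i, f (i + (N+1)) with hTail
  have htail_nonneg : 0 ≤ Tail := tsum_nonneg (fun i => hfnonneg _)
  have htail_summable : Summable (fun i => f (i + (N+1))) :=
    (summable_nat_add_iff (N+1)).mpr hsummable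
  have htail_le : Tail ≤ (3 * Kconst) / y ^ ((1:ℝ)/2) := by
    apply Summable.tsum_le_of_sum_le htail_summable
    intro F
    have hreidx : ∑ i ∈ F, f (i + (N+1)) = ∑ ℓ ∈ F.image (· + (N+1)), f ℓ := by
      rw [Finset.sum_image (by intro a _ b _ hab; simp only at hab; omega)]
    rw [hreidx]
    apply hbound _ y hy0
    intro ℓ hℓ _
    obtain ⟨i, -, rfl⟩ := Finset.mem_image.mp hℓ
    have hi : (0:ℝ) ≤ (i:ℝ) := Nat.cast_nonneg i
    have : ((N:ℝ)) + 1 ≤ ((i + (N+1) : ℕ) : ℝ) := by push_cast; linarith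
    linarith
  rw [hpartial]
  have heq : (∑ i ∈ Finset.range (N+1), f i) - ∑' i, f i = -Tail := by
    rw [← hsplit]; ring
  rw [heq, abs_neg, abs_of_nonneg htail_nonneg]
  exact htail_le

theorem stmt_15 (r : ℕ) :
    Summable (fun ℓ : ℕ => if Powerful ℓ ∧ gexp ℓ = r then 1 / (ℓ : ℝ) else 0) ∧
    ∃ C : ℝ, 0 < C ∧ ∀ y : ℝ, 2 ≤ y →
      |(∑ ℓ ∈ (Finset.Icc 1 ⌊y⌋₊).filter (fun ℓ => Powerful ℓ ∧ gexp ℓ = r), 1 / (ℓ : ℝ)) -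
          (∑' ℓ : ℕ, if Powerful ℓ ∧ gexp ℓ = r then 1 / (ℓ : ℝ) else 0)|
        ≤ C / y ^ ((1 : ℝ) / 2) :=
  main_gen (fun ℓ => Powerful ℓ ∧ gexp ℓ = r) (fun _ h => h.1)
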